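/- Let F be a finite group acting ℚ-linearly on a finite-dimensional ℚ-vector space V such that V is irreducible as an F-representation (V ≠ 0 and the only F-invariant subspaces are 0 and V), and let Λ ⊆ V be a finitely generated additive subgroup spanning V over ℚ. Let E denote the ℝ-algebra of F-equivariant ℝ-linear endomorphisms of V ⊗_ℚ ℝ, and let R = {φ ∈ E | φ(Λ) ⊆ Λ}, where Λ is regarded as a subset of V ⊗_ℚ ℝ via v ↦ v ⊗ 1. Then R is a subring of E which is discrete (in the natural topology of the finite-dimensional ℝ-vector space E) and whose additive group spans E over ℝ; that is, (R,+) is a full lattice in the ℝ-vector space E. -/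

import Mathlib

open scoped TensorProduct

set_option synthInstance.maxHeartbeats 1000000
set_option maxHeartbeats 1000000

private lemma aux_clear_denom {V : Type*} [AddCommGroup V] [Module ℚ V]
    (S : Set V) {x : V} (hx : x ∈ Submodule.span ℚ S) :
    ∃ N : ℕ, N ≠ 0 ∧ (N : ℚ) • x ∈ Submodule.span ℤ S := by
  induction hx using Submodule.span_induction with
  | mem y hy => exact ⟨1, one_ne_zero, by simpa using Submodule.subset_span hy⟩
  | zero => exact ⟨1, one_ne_zero, by simp⟩
  | add y z _ _ hy' hz' =>
      obtain ⟨N₁, h₁, hN₁⟩ := hy'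
      obtain ⟨N₂, h₂, hN₂⟩ := hz'
      refine ⟨N₁ * N₂, mul_ne_zero h₁ h₂, ?_⟩
      have e1 : ((N₁ * N₂ : ℕ) : ℚ) • (y + z)
          = ((N₂ : ℤ) : ℚ) • ((N₁ : ℚ) • y) + ((N₁ : ℤ) : ℚ) • ((N₂ : ℚ) • z) := by
        push_cast
        module
      rw [e1, Int.cast_smul_eq_zsmul, Int.cast_smul_eq_zsmul]
      exact Submodule.add_mem _ (Submodule.smul_mem _ _ hN₁) (Submodule.smul_mem _ _ hN₂)
  | smul q y _ hy' =>
      obtain ⟨N, h0, hN⟩ := hy'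
      refine ⟨q.den * N, mul_ne_zero q.den_nz h0, ?_⟩
      have hq : (q.den : ℚ) * q = (q.num : ℚ) := by
        rw [mul_comm]; exact Rat.mul_den_eq_num q
      have e1 : ((q.den * N : ℕ) : ℚ) • (q • y) = ((q.num : ℤ) : ℚ) • ((N : ℚ) • y) := by
        push_cast
        rw [smul_smul, smul_smul]
        congr 1
        rw [mul_comm ((q.den : ℚ)) ((N : ℚ)), mul_assoc, hq, mul_comm]
      rw [e1, Int.cast_smul_eq_zsmul]
      exact Submodule.smul_mem _ _ hN

set_option maxHeartbeats 40000000
set_option synthInstance.maxHeartbeats 4000000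

theorem stmt14 {V : Type*} [AddCommGroup V] [Module ℚ V] [FiniteDimensional ℚ V]
    {F : Type*} [Group F] [Finite F] (ρ : F →* (V ≃ₗ[ℚ] V))
    (hirr : Nontrivial V ∧
      ∀ p : Submodule ℚ V, (∀ g : F, ∀ v ∈ p, ρ g v ∈ p) → p = ⊥ ∨ p = ⊤)
    (Λ : AddSubgroup V) (hfg : Λ.FG)
    (hspan : Submodule.span ℚ (Λ : Set V) = ⊤) :
    -- `E`: the equivariant endomorphisms, as a subalgebra of `End_ℝ(ℝ ⊗_ℚ V)`
    ∀ E : Subalgebra ℝ (Module.End ℝ (ℝ ⊗[ℚ] V)),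
      E = Subalgebra.centralizer ℝ
            (Set.range fun g : F => ((ρ g).toLinearMap.baseChange ℝ : Module.End ℝ (ℝ ⊗[ℚ] V))) →
    ∀ ΛR : Set (ℝ ⊗[ℚ] V), ΛR = (fun v : V => (1 : ℝ) ⊗ₜ[ℚ] v) '' (Λ : Set V) →
    ∀ R : Set ↥E, R = {φ : ↥E | ∀ x ∈ ΛR, (φ : Module.End ℝ (ℝ ⊗[ℚ] V)) x ∈ ΛR} →
      ((1 : ↥E) ∈ R ∧
        (∀ φ ∈ R, ∀ ψ ∈ R, φ + ψ ∈ R) ∧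
        (∀ φ ∈ R, ∀ ψ ∈ R, φ * ψ ∈ R) ∧
        (∀ φ ∈ R, -φ ∈ R)) ∧
      ∃ b : Module.Basis (Fin (Module.finrank ℝ ↥E)) ℝ ↥E,
        R = (Submodule.span ℤ (Set.range ⇑b) : Set ↥E) := by
  classical
  intro E hE ΛR hΛR R hR
  subst hΛR
  subst hR
  -- basic closure properties of ΛR
  have hadd : ∀ a ∈ ((fun v : V => (1 : ℝ) ⊗ₜ[ℚ] v) '' (Λ : Set V)),
      ∀ b ∈ ((fun v : V => (1 : ℝ) ⊗ₜ[ℚ] v) '' (Λ : Set V)),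
      a + b ∈ ((fun v : V => (1 : ℝ) ⊗ₜ[ℚ] v) '' (Λ : Set V)) := by
    rintro _ ⟨x, hx, rfl⟩ _ ⟨y, hy, rfl⟩
    exact ⟨x + y, Λ.add_mem hx hy, by simp [TensorProduct.tmul_add]⟩
  have hzero : (0 : ℝ ⊗[ℚ] V) ∈ ((fun v : V => (1 : ℝ) ⊗ₜ[ℚ] v) '' (Λ : Set V)) :=
    ⟨0, Λ.zero_mem, by simp⟩
  have hneg : ∀ a ∈ ((fun v : V => (1 : ℝ) ⊗ₜ[ℚ] v) '' (Λ : Set V)),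
      -a ∈ ((fun v : V => (1 : ℝ) ⊗ₜ[ℚ] v) '' (Λ : Set V)) := by
    rintro _ ⟨x, hx, rfl⟩
    exact ⟨-x, Λ.neg_mem hx, by simp [TensorProduct.tmul_neg]⟩
  have hzsmul : ∀ (c : ℤ), ∀ a ∈ ((fun v : V => (1 : ℝ) ⊗ₜ[ℚ] v) '' (Λ : Set V)),
      c • a ∈ ((fun v : V => (1 : ℝ) ⊗ₜ[ℚ] v) '' (Λ : Set V)) := by
    rintro c _ ⟨x, hx, rfl⟩
    refine ⟨c • x, Λ.zsmul_mem hx c, ?_⟩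
    simp [TensorProduct.tmul_smul]
  set ΛR : Set (ℝ ⊗[ℚ] V) := (fun v : V => (1 : ℝ) ⊗ₜ[ℚ] v) '' (Λ : Set V) with hΛR
  set R : Set ↥E := {φ : ↥E | ∀ x ∈ ΛR, (φ : Module.End ℝ (ℝ ⊗[ℚ] V)) x ∈ ΛR} with hR
  constructor
  · refine ⟨?_, ?_, ?_, ?_⟩
    · intro x hx
      simpa using hx
    · intro φ hφ ψ hψ x hx
      have : ((φ + ψ : ↥E) : Module.End ℝ (ℝ ⊗[ℚ] V)) x
          = (φ : Module.End ℝ (ℝ ⊗[ℚ] V)) x + (ψ : Module.End ℝ (ℝ ⊗[ℚ] V)) x := by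
        simp
      rw [this]
      exact hadd _ (hφ x hx) _ (hψ x hx)
    · intro φ hφ ψ hψ x hx
      have : ((φ * ψ : ↥E) : Module.End ℝ (ℝ ⊗[ℚ] V)) x
          = (φ : Module.End ℝ (ℝ ⊗[ℚ] V)) ((ψ : Module.End ℝ (ℝ ⊗[ℚ] V)) x) := by
        simp [Module.End.mul_apply]
      rw [this]
      exact hφ _ (hψ x hx)
    · intro φ hφ x hx
      have : ((-φ : ↥E) : Module.End ℝ (ℝ ⊗[ℚ] V)) x
          = -((φ : Module.End ℝ (ℝ ⊗[ℚ] V)) x) := by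
        simp
      rw [this]
      exact hneg _ (hφ x hx)
  -- Closure properties of R, reproved as haves for later use
  have hzeroR : (0 : ↥E) ∈ R := by
    intro x hx
    have : ((0 : ↥E) : Module.End ℝ (ℝ ⊗[ℚ] V)) x = 0 := by simp
    rw [this]; exact hzero
  have haddR : ∀ φ ∈ R, ∀ ψ ∈ R, φ + ψ ∈ R := by
    intro φ hφ ψ hψ x hx
    have : ((φ + ψ : ↥E) : Module.End ℝ (ℝ ⊗[ℚ] V)) x
        = (φ : Module.End ℝ (ℝ ⊗[ℚ] V)) x + (ψ : Module.End ℝ (ℝ ⊗[ℚ] V)) x := by simp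
    rw [this]; exact hadd _ (hφ x hx) _ (hψ x hx)
  have hsmulR : ∀ (c : ℤ), ∀ φ ∈ R, c • φ ∈ R := by
    intro c φ hφ x hx
    have : ((c • φ : ↥E) : Module.End ℝ (ℝ ⊗[ℚ] V)) x
        = c • ((φ : Module.End ℝ (ℝ ⊗[ℚ] V)) x) := by simp
    rw [this]; exact hzsmul c _ (hφ x hx)
  -- ## A ℚ-basis of V which is a ℤ-basis of Λ
  haveI hNZ : NoZeroSMulDivisors ℤ V := by
    constructor
    intro c x h
    have h2 : (c : ℚ) • x = 0 := by rwa [Int.cast_smul_eq_zsmul]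
    rcases smul_eq_zero.mp h2 with h3 | h3
    · exact Or.inl (by exact_mod_cast h3)
    · exact Or.inr h3
  set Λ' : Submodule ℤ V := AddSubgroup.toIntSubmodule Λ with hΛ'
  have hΛ'fg : Λ'.FG := by
    rw [Submodule.fg_iff_addSubgroup_fg]
    exact hfg
  haveI : Module.Finite ℤ ↥Λ' := Module.Finite.iff_fg.mpr hΛ'fg
  haveI : NoZeroSMulDivisors ℤ ↥Λ' := by
    constructor
    intro c x h
    have h2 : c • (x : V) = 0 := by
      have h3 := congrArg (Subtype.val) h
      simpa using h3
    rcases smul_eq_zero.mp h2 with h3 | h3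
    · exact Or.inl h3
    · exact Or.inr (Subtype.ext h3)
  haveI : Module.Free ℤ ↥Λ' := Module.free_of_finite_type_torsion_free'
  set ι : Type _ := Module.Free.ChooseBasisIndex ℤ ↥Λ' with hι
  haveI : Fintype ι := Module.Free.ChooseBasisIndex.fintype ℤ ↥Λ'
  set w : Module.Basis ι ℤ ↥Λ' := Module.Free.chooseBasis ℤ ↥Λ' with hw
  set u : ι → V := fun i => ((w i : ↥Λ') : V) with hu
  have hu_span : Submodule.span ℤ (Set.range u) = Λ' := by
    have h1 := congrArg (Submodule.map Λ'.subtype) w.span_eq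
    rwa [Submodule.map_span, Submodule.map_top, Submodule.range_subtype, ← Set.range_comp] at h1
  have hu_li : LinearIndependent ℚ u := by
    have h1 : LinearIndependent ℤ u :=
      w.linearIndependent.map' Λ'.subtype (Submodule.ker_subtype Λ')
    exact (LinearIndependent.iff_fractionRing ℤ ℚ).mp h1
  have hu_spanQ : ⊤ ≤ Submodule.span ℚ (Set.range u) := by
    rw [← hspan]
    have h2 : (Λ : Set V) = (Λ' : Set V) := rfl
    rw [h2, ← hu_span, Submodule.span_span_of_tower]
  set vB : Module.Basis ι ℚ V := Module.Basis.mk hu_li hu_spanQ with hvB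
  have hvBu : ⇑vB = u := Module.Basis.coe_mk _ _
  set bR : Module.Basis ι ℝ (ℝ ⊗[ℚ] V) := Algebra.TensorProduct.basis ℝ vB with hbR
  -- elements of ΛR have integer coordinates w.r.t. bR
  have hrepr : ∀ x ∈ ΛR, ∀ i : ι, ∃ m : ℤ, bR.repr x i = (m : ℝ) := by
    rintro _ ⟨lam, hlam, rfl⟩ i
    have hmem : lam ∈ Submodule.span ℤ (Set.range ⇑vB) := by
      rw [hvBu, hu_span]; exact hlam
    obtain ⟨m, hm⟩ := (vB.mem_span_iff_repr_mem ℤ lam).mp hmem i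
    refine ⟨m, ?_⟩
    rw [hbR]
    rw [Algebra.TensorProduct.basis_repr_tmul]
    simp only [Finsupp.smul_apply, Finsupp.mapRange_apply, one_smul]
    rw [← hm]
    simp
  -- the coordinate map on E
  set T := LinearMap.toMatrix bR bR with hT
  set f : ↥E →ₗ[ℝ] (ι × ι → ℝ) :=
    { toFun := fun φ => fun p => T (φ : Module.End ℝ (ℝ ⊗[ℚ] V)) p.1 p.2
      map_add' := by
        intro a b; funext p
        simp [Matrix.add_apply]
      map_smul' := by
        intro c a; funext p
        simp [Matrix.smul_apply] } with hfdef
  have hfinj : Function.Injective f := by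
    intro a b hab
    apply Subtype.ext
    apply T.injective
    ext i j
    exact congrFun hab (i, j)
  set L : Submodule ℤ ↥E :=
    { carrier := R
      add_mem' := fun ha hb => haddR _ ha _ hb
      zero_mem' := hzeroR
      smul_mem' := fun c φ hφ => hsmulR c φ hφ } with hLdef
  have hfL : ∀ φ ∈ R, f φ ∈ Submodule.span ℤ (Set.range ⇑(Pi.basisFun ℝ (ι × ι))) := by
    intro φ hφ
    rw [Module.Basis.mem_span_iff_repr_mem]
    intro p
    have h1 : bR p.2 ∈ ΛR := by
      have h0 : bR p.2 = (1 : ℝ) ⊗ₜ[ℚ] (u p.2) := by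
        rw [hbR, Algebra.TensorProduct.basis_apply, hvBu]
      have h2 : (w p.2 : V) ∈ Λ' := (w p.2).2
      show bR p.2 ∈ (fun v : V => (1 : ℝ) ⊗ₜ[ℚ] v) '' (Λ : Set V)
      refine ⟨u p.2, ?_, h0.symm⟩
      rw [← AddSubgroup.coe_toIntSubmodule Λ]
      exact h2
    obtain ⟨m, hm⟩ := hrepr _ (hφ _ h1) p.1
    refine ⟨m, ?_⟩
    simp only [Pi.basisFun_repr]
    have h3 : f φ p = bR.repr ((φ : Module.End ℝ (ℝ ⊗[ℚ] V)) (bR p.2)) p.1 := by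
      simp [hfdef, hT, LinearMap.toMatrix_apply]
    rw [h3, hm]
    simp
  -- ## The hard part: R spans E over ℝ
  have hspanR : Submodule.span ℝ R = (⊤ : Submodule ℝ ↥E) := by
    haveI : Fintype F := Fintype.ofFinite F
    -- the commutator linear map `d` on End_ℚ(V)
    set d : Module.End ℚ V →ₗ[ℚ] (F → Module.End ℚ V) := LinearMap.pi (fun gg : F =>
      LinearMap.mulRight ℚ ((ρ gg).toLinearMap) - LinearMap.mulLeft ℚ ((ρ gg).toLinearMap))
      with hd
    have hd_apply : ∀ (ψ : Module.End ℚ V) (gg : F),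
        d ψ gg = ψ * (ρ gg).toLinearMap - (ρ gg).toLinearMap * ψ := by
      intro ψ gg
      simp [hd, LinearMap.pi_apply, LinearMap.sub_apply, LinearMap.mulRight_apply,
        LinearMap.mulLeft_apply]
    -- the base-change comparison map `e`
    set e : ℝ ⊗[ℚ] (Module.End ℚ V) →ₗ[ℝ] Module.End ℝ (ℝ ⊗[ℚ] V) :=
      (LinearMap.baseChangeHom ℚ ℝ V V).liftBaseChange ℝ with he
    have he_tmul : ∀ (r : ℝ) (ψ : Module.End ℚ V),
        e (r ⊗ₜ[ℚ] ψ) = r • (LinearMap.baseChange ℝ ψ) := by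
      intro r ψ
      rw [he, LinearMap.liftBaseChange_tmul]
      rfl
    -- `e` is bijective, via matching bases
    set bA : Module.Basis (ι × ι) ℚ (Module.End ℚ V) :=
      (Matrix.stdBasis ℚ ι ι).map (LinearMap.toMatrix vB vB).symm with hbA
    set bT : Module.Basis (ι × ι) ℝ (ℝ ⊗[ℚ] (Module.End ℚ V)) := Algebra.TensorProduct.basis ℝ bA
      with hbT
    set bE2 : Module.Basis (ι × ι) ℝ (Module.End ℝ (ℝ ⊗[ℚ] V)) :=
      (Matrix.stdBasis ℝ ι ι).map (LinearMap.toMatrix (Algebra.TensorProduct.basis ℝ vB)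
        (Algebra.TensorProduct.basis ℝ vB)).symm with hbE2
    have hstd : ∀ p : ι × ι,
        (Matrix.stdBasis ℚ ι ι p).map (algebraMap ℚ ℝ) = Matrix.stdBasis ℝ ι ι p := by
      rintro ⟨pi, pj⟩
      ext i j
      rw [Matrix.map_apply, Matrix.stdBasis_eq_single, Matrix.stdBasis_eq_single]
      simp [Matrix.single, apply_ite (algebraMap ℚ ℝ)]
    have he_basis : ∀ p : ι × ι, e (bT p) = bE2 p := by
      intro p
      have h1 : bT p = (1 : ℝ) ⊗ₜ[ℚ] (bA p) := by
        rw [hbT, Algebra.TensorProduct.basis_apply]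
      rw [h1, he_tmul, one_smul]
      have h4 := LinearMap.toMatrix_baseChange ℝ (bA p) vB vB
      have h5 : LinearMap.toMatrix vB vB (bA p) = Matrix.stdBasis ℚ ι ι p := by
        rw [hbA, Module.Basis.map_apply, LinearEquiv.apply_symm_apply]
      rw [h5, hstd p] at h4
      have h6 : bE2 p = (LinearMap.toMatrix (Algebra.TensorProduct.basis ℝ vB)
          (Algebra.TensorProduct.basis ℝ vB)).symm (Matrix.stdBasis ℝ ι ι p) := by
        rw [hbE2, Module.Basis.map_apply]
      rw [h6, ← h4, LinearEquiv.symm_apply_apply]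
    have he_bij : Function.Bijective ⇑e := by
      have h7 : e = ↑(bT.equiv bE2 (Equiv.refl _)) := by
        apply bT.ext
        intro p
        simp [he_basis p, Module.Basis.equiv_apply]
      rw [h7]
      exact (bT.equiv bE2 (Equiv.refl _)).bijective
    -- the comparison map `e'` on the product side, and its injectivity
    set h0 : (F → Module.End ℚ V) →ₗ[ℚ] (F → Module.End ℝ (ℝ ⊗[ℚ] V)) :=
      LinearMap.pi (fun gg : F => (LinearMap.baseChangeHom ℚ ℝ V V).comp (LinearMap.proj gg))
      with hh0
    set e' : ℝ ⊗[ℚ] (F → Module.End ℚ V) →ₗ[ℝ] (F → Module.End ℝ (ℝ ⊗[ℚ] V)) :=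
      h0.liftBaseChange ℝ with he'
    have he'_tmul : ∀ (r : ℝ) (k : F → Module.End ℚ V) (gg : F),
        e' (r ⊗ₜ[ℚ] k) gg = r • ((k gg).baseChange ℝ) := by
      intro r k gg
      rw [he', LinearMap.liftBaseChange_tmul]
      simp [hh0]
    have he'_inj : Function.Injective ⇑e' := by
      have hcomp : ∀ t, e' t
          = fun gg => e ((TensorProduct.piRight ℚ ℝ ℝ (fun _ : F => Module.End ℚ V)) t gg) := by
        intro t
        induction t using TensorProduct.induction_on with
        | zero => funext gg; simp
        | tmul r k =>
            funext gg
            rw [he'_tmul]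
            have h8 : (TensorProduct.piRight ℚ ℝ ℝ (fun _ : F => Module.End ℚ V)) (r ⊗ₜ[ℚ] k)
                = fun gg => r ⊗ₜ[ℚ] k gg := by
              simp [TensorProduct.piRight_apply, TensorProduct.piRightHom_tmul]
            rw [h8, he_tmul]
        | add x y hx hy =>
            rw [map_add, hx, hy]
            funext gg
            simp [map_add]
      intro s t hst
      rw [hcomp s, hcomp t] at hst
      apply (TensorProduct.piRight ℚ ℝ ℝ (fun _ : F => Module.End ℚ V)).injective
      funext gg
      exact he_bij.injective (congrFun hst gg)
    -- the commutator square
    have hsq : ∀ t : ℝ ⊗[ℚ] (Module.End ℚ V), ∀ gg : F,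
        e' (LinearMap.lTensor ℝ d t) gg
          = e t * ((ρ gg).toLinearMap.baseChange ℝ)
            - ((ρ gg).toLinearMap.baseChange ℝ) * e t := by
      intro t
      induction t using TensorProduct.induction_on with
      | zero => intro gg; simp
      | tmul r ψ =>
          intro gg
          rw [LinearMap.lTensor_tmul, he'_tmul, hd_apply, he_tmul]
          rw [LinearMap.baseChange_sub]
          have hm1 : LinearMap.baseChange ℝ (ψ * (ρ gg).toLinearMap)
              = (LinearMap.baseChange ℝ ψ) * ((ρ gg).toLinearMap.baseChange ℝ) := by
            rw [Module.End.mul_eq_comp, Module.End.mul_eq_comp, LinearMap.baseChange_comp]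
          have hm2 : LinearMap.baseChange ℝ ((ρ gg).toLinearMap * ψ)
              = ((ρ gg).toLinearMap.baseChange ℝ) * (LinearMap.baseChange ℝ ψ) := by
            rw [Module.End.mul_eq_comp, Module.End.mul_eq_comp, LinearMap.baseChange_comp]
          simp only [smul_sub, hm1, hm2, smul_mul_assoc, mul_smul_comm]
          exact smul_sub _ _ _
      | add x y hx hy =>
          intro gg
          simp only [map_add, Pi.add_apply, hx gg, hy gg, add_mul, mul_add]
          abel
    -- elements of E commute with the base-changed group action
    have hEc : ∀ φ : ↥E, ∀ gg : F,
        ((ρ gg).toLinearMap.baseChange ℝ) * (φ : Module.End ℝ (ℝ ⊗[ℚ] V))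
          = (φ : Module.End ℝ (ℝ ⊗[ℚ] V)) * ((ρ gg).toLinearMap.baseChange ℝ) := by
      intro φ gg
      exact (Subalgebra.mem_centralizer_iff ℝ).mp ((le_of_eq hE) φ.2) _ ⟨gg, rfl⟩
    have hΛΛ' : ∀ z : V, z ∈ (Λ : Set V) ↔ z ∈ Λ' := by
      intro z
      rw [← AddSubgroup.coe_toIntSubmodule Λ]
      exact Iff.rfl
    -- base changes of rational equivariant maps lie in the span of R
    have hKmem : ∀ k : Module.End ℚ V, k ∈ LinearMap.ker d →
        (LinearMap.baseChange ℝ k)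
          ∈ Submodule.span ℝ ((fun ψ : ↥E => (ψ : Module.End ℝ (ℝ ⊗[ℚ] V))) '' R) := by
      intro k hk
      obtain ⟨s0, hs0⟩ := hΛ'fg
      have hNx : ∀ x : V, ∃ Nn : ℕ, Nn ≠ 0 ∧ (Nn : ℚ) • (k x) ∈ Λ' := by
        intro x
        have hx : k x ∈ Submodule.span ℚ (Λ' : Set V) := by
          have h10 : (Λ' : Set V) = (Λ : Set V) := AddSubgroup.coe_toIntSubmodule Λ
          rw [h10, hspan]; trivial
        obtain ⟨Nn, hN0, hN⟩ := aux_clear_denom _ hx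
        refine ⟨Nn, hN0, ?_⟩
        rwa [Submodule.span_eq] at hN
      choose Nf hNf0 hNf using hNx
      set Nbig : ℕ := ∏ x ∈ s0, Nf x with hNbig
      have hN0 : Nbig ≠ 0 := Finset.prod_ne_zero_iff.mpr (fun x _ => hNf0 x)
      have hmaps : ∀ y ∈ Λ', (Nbig : ℚ) • k y ∈ Λ' := by
        intro y hy
        have hmap2 : Submodule.map (((Nbig : ℚ) • k).restrictScalars ℤ) Λ' ≤ Λ' := by
          rw [← hs0, Submodule.map_span, Submodule.span_le]
          rintro _ ⟨x, hx, rfl⟩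
          obtain ⟨c, hc⟩ := Finset.dvd_prod_of_mem Nf hx
          have h11 : (Nbig : ℚ) • (k x) = ((c : ℤ) : ℚ) • ((Nf x : ℚ) • k x) := by
            rw [hNbig, hc]
            push_cast
            module
          have h12 : (((Nbig : ℚ) • k).restrictScalars ℤ) x ∈ Λ' := by
            show ((Nbig : ℚ) • k) x ∈ Λ'
            rw [LinearMap.smul_apply, h11, Int.cast_smul_eq_zsmul]
            exact Submodule.smul_mem _ _ (hNf x)
          rw [← hs0] at h12
          exact h12
        have h13 := hmap2 ⟨y, hy, rfl⟩
        simpa using h13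
      set k' : Module.End ℚ V := (Nbig : ℚ) • k with hk'
      have hk'K : k' ∈ LinearMap.ker d := Submodule.smul_mem _ _ hk
      have hk'bcE : (LinearMap.baseChange ℝ k') ∈ E := by
        rw [hE, Subalgebra.mem_centralizer_iff]
        rintro _ ⟨gg, rfl⟩
        have h14 : d k' gg = 0 := by rw [LinearMap.mem_ker.mp hk'K]; rfl
        rw [hd_apply] at h14
        have h13 : k' * (ρ gg).toLinearMap = (ρ gg).toLinearMap * k' := sub_eq_zero.mp h14
        have h15 : LinearMap.baseChange ℝ (k' * (ρ gg).toLinearMap)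
            = LinearMap.baseChange ℝ k' * ((ρ gg).toLinearMap.baseChange ℝ) := by
          rw [Module.End.mul_eq_comp, Module.End.mul_eq_comp, LinearMap.baseChange_comp]
        have h16 : LinearMap.baseChange ℝ ((ρ gg).toLinearMap * k')
            = ((ρ gg).toLinearMap.baseChange ℝ) * LinearMap.baseChange ℝ k' := by
          rw [Module.End.mul_eq_comp, Module.End.mul_eq_comp, LinearMap.baseChange_comp]
        rw [← h15, ← h16, h13]
      have hk'R : (⟨LinearMap.baseChange ℝ k', hk'bcE⟩ : ↥E) ∈ R := by
        intro x hx
        obtain ⟨lam, hlam, rfl⟩ := hx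
        show (LinearMap.baseChange ℝ k') ((1 : ℝ) ⊗ₜ[ℚ] lam) ∈ ΛR
        rw [LinearMap.baseChange_tmul]
        have h17 : k' lam ∈ Λ' := by
          have h18 := hmaps lam ((hΛΛ' lam).mp hlam)
          rw [hk']
          simpa using h18
        exact ⟨k' lam, (hΛΛ' _).mpr h17, rfl⟩
      have h18 : LinearMap.baseChange ℝ k' = (Nbig : ℝ) • LinearMap.baseChange ℝ k := by
        rw [hk', LinearMap.baseChange_smul]
        refine LinearMap.ext fun x => ?_
        rw [LinearMap.smul_apply, LinearMap.smul_apply, Nat.cast_smul_eq_nsmul,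
          Nat.cast_smul_eq_nsmul]
      have h19 : LinearMap.baseChange ℝ k
          = (Nbig : ℝ)⁻¹ • ((⟨LinearMap.baseChange ℝ k', hk'bcE⟩ : ↥E)
              : Module.End ℝ (ℝ ⊗[ℚ] V)) := by
        show LinearMap.baseChange ℝ k = (Nbig : ℝ)⁻¹ • LinearMap.baseChange ℝ k'
        rw [h18, smul_smul, inv_mul_cancel₀ (by exact_mod_cast hN0 : (Nbig : ℝ) ≠ 0), one_smul]
      rw [h19]
      exact Submodule.smul_mem _ _ (Submodule.subset_span ⟨_, hk'R, rfl⟩)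
    -- conclude surjectivity of the span
    rw [eq_top_iff]
    intro φ _
    obtain ⟨t, ht⟩ := he_bij.2 (φ : Module.End ℝ (ℝ ⊗[ℚ] V))
    have h21 : LinearMap.lTensor ℝ d t = 0 := by
      apply he'_inj
      show e' (LinearMap.lTensor ℝ d t) = e' 0
      rw [map_zero]
      funext gg
      rw [hsq t gg, ht]
      show (φ : Module.End ℝ (ℝ ⊗[ℚ] V)) * ((ρ gg).toLinearMap.baseChange ℝ)
          - ((ρ gg).toLinearMap.baseChange ℝ) * (φ : Module.End ℝ (ℝ ⊗[ℚ] V)) = 0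
      rw [sub_eq_zero]
      exact (hEc φ gg).symm
    have h22 := (Module.Flat.lTensor_exact (M := ℝ) (LinearMap.exact_subtype_ker_map d)) t
    obtain ⟨s, hs⟩ := h22.mp h21
    have h24 : ∀ s2 : ℝ ⊗[ℚ] ↥(LinearMap.ker d),
        e (LinearMap.lTensor ℝ (LinearMap.ker d).subtype s2)
          ∈ Submodule.span ℝ ((fun ψ : ↥E => (ψ : Module.End ℝ (ℝ ⊗[ℚ] V))) '' R) := by
      intro s2
      induction s2 using TensorProduct.induction_on with
      | zero => simp
      | tmul r kk =>
          rw [LinearMap.lTensor_tmul, he_tmul]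
          exact Submodule.smul_mem _ _ (hKmem _ kk.2)
      | add x y hx hy =>
          rw [map_add, map_add]
          exact Submodule.add_mem _ hx hy
    have h25 : (φ : Module.End ℝ (ℝ ⊗[ℚ] V))
        ∈ Submodule.span ℝ ((fun ψ : ↥E => (ψ : Module.End ℝ (ℝ ⊗[ℚ] V))) '' R) := by
      rw [← ht, ← hs]
      exact h24 s
    have h26 : Submodule.span ℝ ((fun ψ : ↥E => (ψ : Module.End ℝ (ℝ ⊗[ℚ] V))) '' R)
        = Submodule.map (E.val.toLinearMap) (Submodule.span ℝ R) := by
      rw [Submodule.map_span]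
      rfl
    rw [h26] at h25
    obtain ⟨ψ, hψ, hψeq⟩ := h25
    have h27 : ψ = φ := Subtype.ext hψeq
    rwa [← h27]
  -- ## Assembling via the ZLattice machinery
  set W : Submodule ℝ (ι × ι → ℝ) := LinearMap.range f with hW
  set g : ↥E ≃ₗ[ℝ] ↥W := LinearEquiv.ofInjective f hfinj with hg
  set gZ : ↥E →ₗ[ℤ] ↥W := ((g.restrictScalars ℤ : ↥E ≃ₗ[ℤ] ↥W) : ↥E →ₗ[ℤ] ↥W) with hgZ
  set L₂ : Submodule ℤ ↥W := Submodule.map gZ L with hL₂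
  haveI hdisc : DiscreteTopology ↥L₂ := by
    haveI : DiscreteTopology ↥(Submodule.span ℤ (Set.range ⇑(Pi.basisFun ℝ (ι × ι)))) :=
      ZSpan.discreteTopology_pi_basisFun
    have hmem : ∀ x : ↥L₂, ((x : ↥W) : ι × ι → ℝ)
        ∈ Submodule.span ℤ (Set.range ⇑(Pi.basisFun ℝ (ι × ι))) := by
      rintro ⟨x, hx⟩
      obtain ⟨ψ, hψ, rfl⟩ := hx
      have h4 : ((gZ ψ : ↥W) : ι × ι → ℝ) = f ψ := rfl
      rw [h4]
      exact hfL ψ hψ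
    let θ : ↥L₂ → ↥(Submodule.span ℤ (Set.range ⇑(Pi.basisFun ℝ (ι × ι)))) :=
      fun x => ⟨((x : ↥W) : ι × ι → ℝ), hmem x⟩
    have hθc : Continuous θ :=
      Continuous.subtype_mk (continuous_subtype_val.comp continuous_subtype_val) _
    have hθi : Function.Injective θ := by
      intro a b hab
      have h5 := congrArg Subtype.val hab
      exact Subtype.ext (Subtype.ext h5)
    exact DiscreteTopology.of_continuous_injective hθc hθi
  have hL₂coe : (L₂ : Set ↥W) = ⇑g '' R := by
    ext x
    simp only [hL₂, SetLike.mem_coe, Submodule.mem_map, Set.mem_image]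
    constructor
    · rintro ⟨ψ, hψ, rfl⟩
      exact ⟨ψ, hψ, rfl⟩
    · rintro ⟨ψ, hψ, rfl⟩
      exact ⟨ψ, hψ, rfl⟩
  haveI hzl : IsZLattice ℝ L₂ := by
    constructor
    rw [hL₂coe]
    have h6 : ⇑g '' R = ⇑(g : ↥E →ₗ[ℝ] ↥W) '' R := rfl
    rw [h6, ← Submodule.map_span, hspanR, Submodule.map_top]
    exact LinearEquiv.range g
  haveI : Module.Finite ℤ ↥L₂ := ZLattice.module_finite ℝ L₂
  haveI : Module.Free ℤ ↥L₂ := ZLattice.module_free ℝ L₂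
  set κ := Module.Free.ChooseBasisIndex ℤ ↥L₂ with hκ
  set bZ : Module.Basis κ ℤ ↥L₂ := Module.Free.chooseBasis ℤ ↥L₂ with hbZ
  set bW : Module.Basis κ ℝ ↥W := Module.Basis.ofZLatticeBasis ℝ L₂ bZ with hbW
  have hbWspan : Submodule.span ℤ (Set.range ⇑bW) = L₂ := bZ.ofZLatticeBasis_span ℝ
  set b₁ : Module.Basis κ ℝ ↥E := bW.map g.symm with hb₁
  have himg : Submodule.map gZ (Submodule.span ℤ (Set.range ⇑b₁))
      = Submodule.span ℤ (Set.range ⇑bW) := by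
    rw [Submodule.map_span]
    congr 1
    have hb₁coe : ⇑b₁ = ⇑(g.symm) ∘ ⇑bW := by
      funext i
      exact Module.Basis.map_apply _ _ _
    rw [hb₁coe, Set.range_comp, ← Set.image_comp]
    have h8 : ⇑gZ ∘ ⇑(g.symm) = id := by
      funext y
      show (LinearEquiv.restrictScalars ℤ g) (g.symm y) = y
      rw [LinearEquiv.restrictScalars_apply, LinearEquiv.apply_symm_apply]
    rw [h8, Set.image_id]
  have hcoegZ : ∀ ψ : ↥E, ((gZ ψ : ↥W) : ι × ι → ℝ) = f ψ := fun _ => rfl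
  have hgZinj : Function.Injective ⇑gZ := by
    intro a b hab
    apply hfinj
    rw [← hcoegZ a, ← hcoegZ b, hab]
  have hspan₁ : Submodule.span ℤ (Set.range ⇑b₁) = L := by
    have hmapeq : Submodule.map gZ (Submodule.span ℤ (Set.range ⇑b₁)) = Submodule.map gZ L := by
      rw [himg, hbWspan, hL₂]
    exact Submodule.map_injective_of_injective hgZinj hmapeq
  haveI : FiniteDimensional ℝ ↥W := inferInstance
  haveI : FiniteDimensional ℝ ↥E := LinearEquiv.finiteDimensional g.symm
  have hcard : Fintype.card κ = Module.finrank ℝ ↥E := by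
    have h1 : Module.finrank ℤ ↥L₂ = Module.finrank ℝ ↥W := ZLattice.rank ℝ L₂
    have h2 : Module.finrank ℝ ↥W = Module.finrank ℝ ↥E := g.symm.finrank_eq
    rw [← h2, ← h1, Module.finrank_eq_card_chooseBasisIndex]
  refine ⟨b₁.reindex (Fintype.equivFinOfCardEq hcard), ?_⟩
  have h10 : Submodule.span ℤ (Set.range ⇑(b₁.reindex (Fintype.equivFinOfCardEq hcard))) = L := by
    rw [Module.Basis.range_reindex]
    exact hspan₁
  rw [h10]
  rfl
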